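/- Let Ω = {Z_1,…,Z_N} be a finite subset of V_nc with intertwining algebra S ⊆ ℂ^{N₀×N₀} as above. A graded kernel K on Ω with values in L(A_nc, L(Y)_nc) is a completely positive noncommutative kernel if and only if the associated map φ_K : A^{N₀×N₀} → L(Y^{N₀}) is a completely positive (S,S*)-bimodule map. Conversely, every completely positive (S,S*)-bimodule map φ : A^{N₀×N₀} → L(Y^{N₀}) equals φ_K for a uniquely determined completely positive noncommutative kernel K on Ω. -/

import Mathlib

open scoped ComplexOrder Matrix

noncomputable section

namespace NCK

/-! ## Actions of scalar complex matrices on matrices over a `ℂ`-module -/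

/-- Left action `α · Z` of a complex scalar matrix on a matrix over a `ℂ`-module. -/
def cMul {p q r : Type*} [Fintype q] {M : Type*} [AddCommMonoid M] [Module ℂ M]
    (α : Matrix p q ℂ) (Z : Matrix q r M) : Matrix p r M :=
  Matrix.of fun i k => ∑ j, α i j • Z j k

/-- Right action `Z · α` of a complex scalar matrix on a matrix over a `ℂ`-module. -/
def mulC {p q r : Type*} [Fintype q] {M : Type*} [AddCommMonoid M] [Module ℂ M]
    (Z : Matrix p q M) (α : Matrix q r ℂ) : Matrix p r M :=
  Matrix.of fun i k => ∑ j, α j k • Z i j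

/-- The sandwich `α · P · βᴴ`. -/
def sandwich {p q p' q' : Type*} [Fintype p] [Fintype q] {M : Type*} [AddCommMonoid M]
    [Module ℂ M] (α : Matrix p' p ℂ) (P : Matrix p q M) (β : Matrix q' q ℂ) :
    Matrix p' q' M :=
  mulC (cMul α P) βᴴ

/-- A scalar complex matrix viewed as a matrix over the algebra `A`, i.e. `α ⊗ 1_A`. -/
def matC {p q : Type*} (A : Type*) [Semiring A] [Algebra ℂ A] (α : Matrix p q ℂ) :
    Matrix p q A :=
  α.map (algebraMap ℂ A)

/-! ## Positivity and norm bounds for matrices over `*`-rings and for operator matrices -/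

/-- Positivity of a square matrix over a `*`-ring, via factorization `Q = Cᴴ * C`
(the standard characterization of positivity in a matrix `C⋆`-algebra). -/
def MatPos {n : Type*} [Fintype n] {R : Type*} [NonUnitalSemiring R] [StarRing R]
    (Q : Matrix n n R) : Prop :=
  ∃ C : Matrix n n R, Q = Cᴴ * C

/-- `‖Q‖ ≤ c` for a matrix over a unital `*`-algebra, expressed as positivity of
`c² • 1 - Qᴴ * Q`. -/
def MatNormLe {n : Type*} [Fintype n] [DecidableEq n] {R : Type*} [Ring R] [StarRing R]
    [Algebra ℂ R] (Q : Matrix n n R) (c : ℝ) : Prop :=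
  MatPos ((((c : ℂ) ^ 2) • (1 : Matrix n n R)) - Qᴴ * Q)

/-- Positivity of an element of a `C⋆`-algebra, via factorization `x = (star c) * c`. -/
def elemPos {R : Type*} [Mul R] [Star R] (x : R) : Prop :=
  ∃ c : R, x = star c * c

variable {Y : Type*} [NormedAddCommGroup Y] [InnerProductSpace ℂ Y]

/-- Positivity of a square matrix of Hilbert-space operators, via the quadratic form. -/
def OpMatPos {n : Type*} [Fintype n] (T : Matrix n n (Y →L[ℂ] Y)) : Prop :=
  ∀ y : n → Y, 0 ≤ ∑ i, ∑ j, (inner ℂ (y i) (T i j (y j)) : ℂ)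

/-- Positivity of a doubly indexed (block) matrix of Hilbert-space operators. -/
def OpMatPos2 {k n : Type*} [Fintype k] [Fintype n]
    (T : Matrix k k (Matrix n n (Y →L[ℂ] Y))) : Prop :=
  ∀ y : k → n → Y, 0 ≤ ∑ i, ∑ j, ∑ a, ∑ b, (inner ℂ (y i a) (T i j a b (y j b)) : ℂ)

/-- `‖T‖ ≤ c` for a matrix of Hilbert-space operators. -/
def OpMatNormLe {p q : Type*} [Fintype p] [Fintype q]
    (T : Matrix p q (Y →L[ℂ] Y)) (c : ℝ) : Prop :=
  ∀ y : q → Y, ∑ i, ‖∑ j, T i j (y j)‖ ^ 2 ≤ c ^ 2 * ∑ j, ‖y j‖ ^ 2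

/-- `‖T‖ ≤ c` for a doubly indexed (block) matrix of Hilbert-space operators. -/
def OpMatNormLe2 {k n : Type*} [Fintype k] [Fintype n]
    (T : Matrix k k (Matrix n n (Y →L[ℂ] Y))) (c : ℝ) : Prop :=
  ∀ y : k → n → Y,
    ∑ i, ∑ a, ‖∑ j, ∑ b, T i j a b (y j b)‖ ^ 2 ≤ c ^ 2 * ∑ j, ∑ b, ‖y j b‖ ^ 2

/-! ## Completely positive / completely bounded / bimodule maps on matrix algebras -/

/-- A map `φ : A^{ι×ι} → L(Y)^{ι×ι} (≅ L(Y^ι))` is completely positive if all its matrix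
amplifications map positive elements to positive elements. -/
def IsCPMap {A : Type*} [NonUnitalSemiring A] [StarRing A] {ι : Type*} [Fintype ι]
    (φ : Matrix ι ι A → Matrix ι ι (Y →L[ℂ] Y)) : Prop :=
  ∀ (k : ℕ) (Q : Matrix (Fin k) (Fin k) (Matrix ι ι A)),
    MatPos Q → OpMatPos2 (Matrix.of fun i j => φ (Q i j))

/-- A map `φ : A^{ι×ι} → L(Y)^{ι×ι} (≅ L(Y^ι))` is completely bounded if the norms of its
matrix amplifications are uniformly bounded. -/
def IsCBMap {A : Type*} [Ring A] [StarRing A] [Algebra ℂ A] {ι : Type*} [Fintype ι]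
    [DecidableEq ι] (φ : Matrix ι ι A → Matrix ι ι (Y →L[ℂ] Y)) : Prop :=
  ∃ c : ℝ, ∀ (k : ℕ) (Q : Matrix (Fin k) (Fin k) (Matrix ι ι A)),
    MatNormLe Q 1 → OpMatNormLe2 (Matrix.of fun i j => φ (Q i j)) c

/-- `φ` is an `(S, S^*)`-bimodule map: `φ (α · P · β^*) = L_α (φ P) L_{β^*}` for `α, β ∈ S`. -/
def IsBimod {ι : Type*} [Fintype ι] {A B : Type*} [AddCommMonoid A] [Module ℂ A]
    [AddCommMonoid B] [Module ℂ B] (S : Set (Matrix ι ι ℂ))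
    (φ : Matrix ι ι A → Matrix ι ι B) : Prop :=
  ∀ α ∈ S, ∀ β ∈ S, ∀ P, φ (sandwich α P β) = sandwich α (φ P) β

/-! ## Noncommutative sets, functions and kernels -/

/-- A subset of the noncommutative space `V_nc`, given levelwise. -/
abbrev NCSet (V : Type*) := ∀ n : ℕ, Set (Matrix (Fin n) (Fin n) V)

/-- The type of graded kernels on all of `V_nc` with values in `L(A_nc, B_nc)`;
a kernel "on `Ω`" is such a family, with all conditions imposed only at points of `Ω`. -/
abbrev KernelFam (V A B : Type*) :=
  ∀ n m : ℕ, Matrix (Fin n) (Fin n) V → Matrix (Fin m) (Fin m) V →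
    (Matrix (Fin n) (Fin m) A → Matrix (Fin n) (Fin m) B)

/-- A graded kernel assigns a *linear* map `K(Z,W) : A^{n×m} → B^{n×m}` to points of `Ω`. -/
def GradedLinearOn {V A B : Type*} [AddCommMonoid A] [Module ℂ A] [AddCommMonoid B]
    [Module ℂ B] (Ω : NCSet V) (K : KernelFam V A B) : Prop :=
  ∀ n m Z W, Z ∈ Ω n → W ∈ Ω m → IsLinearMap ℂ (K n m Z W)

/-- `K` respects intertwinings at points of `Ω`: whenever `α Z = Z' α` and `β W = W' β`,
`α K(Z,W)(P) β^* = K(Z',W')(α P β^*)`. -/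
def IsNCKernelOn {V : Type*} [AddCommMonoid V] [Module ℂ V] {A B : Type*}
    [AddCommMonoid A] [Module ℂ A] [AddCommMonoid B] [Module ℂ B]
    (Ω : NCSet V) (K : KernelFam V A B) : Prop :=
  ∀ (n n' m m' : ℕ) (Z : Matrix (Fin n) (Fin n) V) (Z' : Matrix (Fin n') (Fin n') V)
    (W : Matrix (Fin m) (Fin m) V) (W' : Matrix (Fin m') (Fin m') V),
    Z ∈ Ω n → Z' ∈ Ω n' → W ∈ Ω m → W' ∈ Ω m' →
    ∀ (α : Matrix (Fin n') (Fin n) ℂ) (β : Matrix (Fin m') (Fin m) ℂ),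
      cMul α Z = mulC Z' α → cMul β W = mulC W' β →
      ∀ P, sandwich α (K n m Z W P) β = K n' m' Z' W' (sandwich α P β)

/-- `K` is Hermitian on `Ω`: `K(W,Z)(P^*) = (K(Z,W)(P))^*`. -/
def IsHermitianOn {V A B : Type*} [Star A] [Star B] (Ω : NCSet V) (K : KernelFam V A B) :
    Prop :=
  ∀ n m Z W, Z ∈ Ω n → W ∈ Ω m → ∀ P : Matrix (Fin n) (Fin m) A,
    K m n W Z Pᴴ = (K n m Z W P)ᴴ

/-- The complete positivity condition for a kernel with values in `L(A_nc, L(Y)_nc)`,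
in the Hilbert-space (quadratic form) formulation. -/
def IsCPOnH {V : Type*} {A : Type*} [NonUnitalSemiring A] [StarRing A]
    (Ω : NCSet V) (K : KernelFam V A (Y →L[ℂ] Y)) : Prop :=
  ∀ (L : ℕ) (ns : Fin L → ℕ) (Z : ∀ l, Matrix (Fin (ns l)) (Fin (ns l)) V),
    (∀ l, Z l ∈ Ω (ns l)) →
    ∀ (P : ∀ l, Matrix (Fin (ns l)) (Fin 1) A) (y : ∀ l, Fin (ns l) → Y),
      0 ≤ ∑ l, ∑ l', ∑ a, ∑ b,
        (inner ℂ (y l a) (K (ns l) (ns l') (Z l) (Z l') (P l * (P l')ᴴ) a b (y l' b)) : ℂ)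

/-- The complete positivity condition for a kernel with values in `L(A_nc, B_nc)`,
`B` a `C⋆`-algebra, in the `C⋆`-algebraic formulation. -/
def IsCPOnC {V : Type*} {A B : Type*} [NonUnitalSemiring A] [StarRing A]
    [NonUnitalSemiring B] [StarRing B] (Ω : NCSet V) (K : KernelFam V A B) : Prop :=
  ∀ (L : ℕ) (ns : Fin L → ℕ) (Z : ∀ l, Matrix (Fin (ns l)) (Fin (ns l)) V),
    (∀ l, Z l ∈ Ω (ns l)) →
    ∀ (a : ∀ l, Matrix (Fin (ns l)) (Fin 1) A) (b : ∀ l, Matrix (Fin (ns l)) (Fin 1) B),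
      elemPos (∑ l, ∑ l',
        ((b l)ᴴ * (K (ns l) (ns l') (Z l) (Z l') (a l * (a l')ᴴ)) * b l') 0 0)

/-- Completely positive noncommutative kernel on `Ω` (Hilbert-space-valued version). -/
def IsCPNCKernelOnH {V : Type*} [AddCommMonoid V] [Module ℂ V] {A : Type*}
    [NonUnitalSemiring A] [StarRing A] [Module ℂ A] (Ω : NCSet V)
    (K : KernelFam V A (Y →L[ℂ] Y)) : Prop :=
  GradedLinearOn Ω K ∧ IsNCKernelOn Ω K ∧ IsCPOnH Ω K

/-- Completely positive noncommutative kernel on `Ω` (`C⋆`-algebra-valued version). -/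
def IsCPNCKernelOnC {V : Type*} [AddCommMonoid V] [Module ℂ V] {A B : Type*}
    [NonUnitalSemiring A] [StarRing A] [Module ℂ A]
    [NonUnitalSemiring B] [StarRing B] [Module ℂ B] (Ω : NCSet V)
    (K : KernelFam V A B) : Prop :=
  GradedLinearOn Ω K ∧ IsNCKernelOn Ω K ∧ IsCPOnC Ω K

/-- Noncommutative function `H` on `Ω` with values in `W_nc`:
graded, and `Z α = α Z'` implies `H(Z) (α ⊗ 1) = (α ⊗ 1) H(Z')`. -/
def IsNCFunOn {V W : Type*} [AddCommMonoid V] [Module ℂ V] [AddCommMonoid W] [Module ℂ W]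
    (Ω : NCSet V) (H : ∀ n, Matrix (Fin n) (Fin n) V → Matrix (Fin n) (Fin n) W) : Prop :=
  ∀ (n m : ℕ) (Z : Matrix (Fin n) (Fin n) V) (Z' : Matrix (Fin m) (Fin m) V),
    Z ∈ Ω n → Z' ∈ Ω m → ∀ α : Matrix (Fin n) (Fin m) ℂ,
      mulC Z α = cMul α Z' → mulC (H n Z) α = cMul α (H m Z')

/-! ## Kernels on a finite (indexed) set of points -/

/-- Kernels on a finite set of points `Z i`, `i : Fin Np`, of sizes `d i`. -/
abbrev KernelIx {Np : ℕ} (d : Fin Np → ℕ) (A B : Type*) :=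
  ∀ i j : Fin Np, Matrix (Fin (d i)) (Fin (d j)) A → Matrix (Fin (d i)) (Fin (d j)) B

/-- Each value `K(Z_i, Z_j)` is a linear map. -/
def GradedLinearIx {Np : ℕ} {d : Fin Np → ℕ} {A B : Type*} [AddCommMonoid A] [Module ℂ A]
    [AddCommMonoid B] [Module ℂ B] (K : KernelIx d A B) : Prop :=
  ∀ i j, IsLinearMap ℂ (K i j)

/-- The respects-intertwinings condition for a kernel on the finite set of points `Z`. -/
def IsNCKernelIx {V : Type*} [AddCommMonoid V] [Module ℂ V] {Np : ℕ} {d : Fin Np → ℕ}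
    {A B : Type*} [AddCommMonoid A] [Module ℂ A] [AddCommMonoid B] [Module ℂ B]
    (Z : ∀ i, Matrix (Fin (d i)) (Fin (d i)) V) (K : KernelIx d A B) : Prop :=
  ∀ (i i' j j' : Fin Np) (α : Matrix (Fin (d i')) (Fin (d i)) ℂ)
    (β : Matrix (Fin (d j')) (Fin (d j)) ℂ),
    cMul α (Z i) = mulC (Z i') α → cMul β (Z j) = mulC (Z j') β →
    ∀ P, sandwich α (K i j P) β = K i' j' (sandwich α P β)

/-- `K(Z_j, Z_i)(P^*) = (K(Z_i, Z_j)(P))^*`. -/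
def IsHermitianIx {Np : ℕ} {d : Fin Np → ℕ} {A B : Type*} [Star A] [Star B]
    (K : KernelIx d A B) : Prop :=
  ∀ i j (P : Matrix (Fin (d i)) (Fin (d j)) A), K j i Pᴴ = (K i j P)ᴴ

/-- Complete positivity condition, Hilbert-space version, finite set of points. -/
def IsCPIxH {Np : ℕ} {d : Fin Np → ℕ} {A : Type*} [NonUnitalSemiring A] [StarRing A]
    (K : KernelIx d A (Y →L[ℂ] Y)) : Prop :=
  ∀ (L : ℕ) (f : Fin L → Fin Np) (P : ∀ l, Matrix (Fin (d (f l))) (Fin 1) A)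
    (y : ∀ l, Fin (d (f l)) → Y),
    0 ≤ ∑ l, ∑ l', ∑ a, ∑ b,
      (inner ℂ (y l a) (K (f l) (f l') (P l * (P l')ᴴ) a b (y l' b)) : ℂ)

/-- Complete positivity condition, `C⋆`-algebraic version, finite set of points. -/
def IsCPIxC {Np : ℕ} {d : Fin Np → ℕ} {A B : Type*} [NonUnitalSemiring A] [StarRing A]
    [NonUnitalSemiring B] [StarRing B] (K : KernelIx d A B) : Prop :=
  ∀ (L : ℕ) (f : Fin L → Fin Np) (a : ∀ l, Matrix (Fin (d (f l))) (Fin 1) A)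
    (b : ∀ l, Matrix (Fin (d (f l))) (Fin 1) B),
    elemPos (∑ l, ∑ l', ((b l)ᴴ * (K (f l) (f l') (a l * (a l')ᴴ)) * b l') 0 0)

/-- Completely positive nc kernel on a finite set of points (Hilbert version). -/
def IsCPNCKernelIxH {V : Type*} [AddCommMonoid V] [Module ℂ V] {Np : ℕ} {d : Fin Np → ℕ}
    {A : Type*} [NonUnitalSemiring A] [StarRing A] [Module ℂ A]
    (Z : ∀ i, Matrix (Fin (d i)) (Fin (d i)) V) (K : KernelIx d A (Y →L[ℂ] Y)) : Prop :=
  GradedLinearIx K ∧ IsNCKernelIx Z K ∧ IsCPIxH K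

/-- Completely positive nc kernel on a finite set of points (`C⋆` version). -/
def IsCPNCKernelIxC {V : Type*} [AddCommMonoid V] [Module ℂ V] {Np : ℕ} {d : Fin Np → ℕ}
    {A B : Type*} [NonUnitalSemiring A] [StarRing A] [Module ℂ A]
    [NonUnitalSemiring B] [StarRing B] [Module ℂ B]
    (Z : ∀ i, Matrix (Fin (d i)) (Fin (d i)) V) (K : KernelIx d A B) : Prop :=
  GradedLinearIx K ∧ IsNCKernelIx Z K ∧ IsCPIxC K

/-! ## The block-matrix encoding of a kernel on a finite set of points -/

/-- The block index set for the direct sum point `Z^{(0)} = ⊕ᵢ Z_i`. -/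
abbrev BIx {Np : ℕ} (d : Fin Np → ℕ) : Type := Σ i : Fin Np, Fin (d i)

/-- The direct sum `Z^{(0)} = ⊕ᵢ Z_i` of a finite family of nc points. -/
def dirSum {V : Type*} [Zero V] {Np : ℕ} {d : Fin Np → ℕ}
    (Z : ∀ i, Matrix (Fin (d i)) (Fin (d i)) V) : Matrix (BIx d) (BIx d) V :=
  Matrix.of fun x y =>
    if h : x.1 = y.1 then Z x.1 x.2 (Fin.cast (congrArg d h.symm) y.2) else 0

/-- The intertwining algebra `S = {α : α Z^{(0)} = Z^{(0)} α}` of the direct-sum point. -/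
def interAlg {V : Type*} [AddCommMonoid V] [Module ℂ V] {Np : ℕ} {d : Fin Np → ℕ}
    (Z : ∀ i, Matrix (Fin (d i)) (Fin (d i)) V) : Set (Matrix (BIx d) (BIx d) ℂ) :=
  {α | cMul α (dirSum Z) = mulC (dirSum Z) α}

/-- The block map `φ_K ([P_{ij}]) = [K(Z_i,Z_j)(P_{ij})]` associated with a kernel on a
finite set of points. -/
def phiK {Np : ℕ} {d : Fin Np → ℕ} {A B : Type*} (K : KernelIx d A B) :
    Matrix (BIx d) (BIx d) A → Matrix (BIx d) (BIx d) B :=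
  fun P => Matrix.of fun x y =>
    K x.1 y.1 (Matrix.of fun a b => P ⟨x.1, a⟩ ⟨y.1, b⟩) x.2 y.2

/-- The block map associated with a kernel and a finite tuple `f` of (indices of) points. -/
def phiKt {Np : ℕ} {d : Fin Np → ℕ} {A B : Type*} {L : ℕ} (f : Fin L → Fin Np)
    (K : KernelIx d A B) :
    Matrix (Σ l, Fin (d (f l))) (Σ l, Fin (d (f l))) A →
      Matrix (Σ l, Fin (d (f l))) (Σ l, Fin (d (f l))) B :=
  fun P => Matrix.of fun x y =>
    K (f x.1) (f y.1) (Matrix.of fun a b => P ⟨x.1, a⟩ ⟨y.1, b⟩) x.2 y.2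

/-- The block map associated with a general kernel and a finite tuple of points. -/
def phiKg {V A B : Type*} (K : KernelFam V A B) {L : ℕ} (ns : Fin L → ℕ)
    (Z : ∀ l, Matrix (Fin (ns l)) (Fin (ns l)) V) :
    Matrix (Σ l, Fin (ns l)) (Σ l, Fin (ns l)) A →
      Matrix (Σ l, Fin (ns l)) (Σ l, Fin (ns l)) B :=
  fun P => Matrix.of fun x y =>
    K (ns x.1) (ns y.1) (Z x.1) (Z y.1) (Matrix.of fun a b => P ⟨x.1, a⟩ ⟨y.1, b⟩) x.2 y.2

/-! ## Full nc sets and envelopes -/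

/-- Direct sum of two nc points. -/
def dsum2 {V : Type*} [Zero V] {n m : ℕ} (Z : Matrix (Fin n) (Fin n) V)
    (W : Matrix (Fin m) (Fin m) V) : Matrix (Fin (n + m)) (Fin (n + m)) V :=
  Matrix.of fun i j =>
    Sum.elim
      (fun a => Sum.elim (fun b => Z a b) (fun _ => (0 : V)) (finSumFinEquiv.symm j))
      (fun a => Sum.elim (fun _ => (0 : V)) (fun b => W a b) (finSumFinEquiv.symm j))
      (finSumFinEquiv.symm i)

/-- A full nc set: closed under direct sums and invariant under left injective
intertwinings. -/
def IsFullNC {V : Type*} [AddCommMonoid V] [Module ℂ V] (Ξ : NCSet V) : Prop :=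
  (∀ (n m : ℕ) (Z : Matrix (Fin n) (Fin n) V) (W : Matrix (Fin m) (Fin m) V),
      Z ∈ Ξ n → W ∈ Ξ m → dsum2 Z W ∈ Ξ (n + m)) ∧
  (∀ (n m : ℕ) (Z : Matrix (Fin n) (Fin n) V) (Z' : Matrix (Fin m) (Fin m) V)
      (ι : Matrix (Fin n) (Fin m) ℂ), Z ∈ Ξ n → Function.Injective ι.mulVec →
      cMul ι Z' = mulC Z ι → Z' ∈ Ξ m)

/-- The full nc envelope of a subset `Ω` of `V_nc`. -/
def fullEnvelope {V : Type*} [AddCommMonoid V] [Module ℂ V] (Ω : NCSet V) : NCSet V :=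
  fun n => {Z | ∀ Ξ : NCSet V, IsFullNC Ξ → (∀ k, Ω k ⊆ Ξ k) → Z ∈ Ξ n}

/-! ## 2×2 operator blocks -/

/-- A `2 × 2` matrix of operators on `Y`, as an operator on `Y ⊕ Y` (ℓ²-sum). -/
def blk2 (T : Matrix (Fin 2) (Fin 2) (Y →L[ℂ] Y)) :
    (PiLp 2 fun _ : Fin 2 => Y) →L[ℂ] (PiLp 2 fun _ : Fin 2 => Y) :=
  ((PiLp.continuousLinearEquiv 2 ℂ (fun _ : Fin 2 => Y)).symm.toContinuousLinearMap) ∘L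
    ((ContinuousLinearMap.pi fun i => ∑ j, (T i j) ∘L (ContinuousLinearMap.proj j)) ∘L
      ((PiLp.continuousLinearEquiv 2 ℂ (fun _ : Fin 2 => Y)).toContinuousLinearMap))


/-- Complete positivity for a map `φ : A → L(Y)` defined on a `C⋆`-algebra `A`. -/
def IsCPMapE {A : Type*} [NonUnitalSemiring A] [StarRing A] (φ : A → (Y →L[ℂ] Y)) : Prop :=
  ∀ (k : ℕ) (Q : Matrix (Fin k) (Fin k) A), MatPos Q →
    OpMatPos (Matrix.of fun i j => φ (Q i j))

/-- Complete boundedness for a map `φ : A → L(Y)` defined on a `C⋆`-algebra `A`. -/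
def IsCBMapE {A : Type*} [Ring A] [StarRing A] [Algebra ℂ A] (φ : A → (Y →L[ℂ] Y)) : Prop :=
  ∃ c : ℝ, ∀ (k : ℕ) (Q : Matrix (Fin k) (Fin k) A),
    MatNormLe Q 1 → OpMatNormLe (Matrix.of fun i j => φ (Q i j)) c

/-- The strict positivity domain `ℙ_𝔔 = {Z ∈ Ξ : 𝔔(Z,Z)(I) ≻ 0}` of a kernel `𝔔` on `Ξ`. -/
def posDom {V : Type*} {N : Type*} [NormedAddCommGroup N] [InnerProductSpace ℂ N]
    [CompleteSpace N] (Ξ : NCSet V) (Q : KernelFam V ℂ (N →L[ℂ] N)) : NCSet V :=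
  fun n => {Z | Z ∈ Ξ n ∧ ∃ ε : ℝ, 0 < ε ∧
    MatPos (Q n n Z Z 1 - (ε : ℂ) • (1 : Matrix (Fin n) (Fin n) (N →L[ℂ] N)))}

section Helpers

variable {Np : ℕ} {d : Fin Np → ℕ}

/-- Embed a block at position (i,j) into a `BIx`-indexed matrix. -/
def emb {A : Type*} [Zero A] (i j : Fin Np) (P : Matrix (Fin (d i)) (Fin (d j)) A) :
    Matrix (BIx d) (BIx d) A :=
  Matrix.of fun x y =>
    if hx : x.1 = i then
      if hy : y.1 = j then P (Fin.cast (congrArg d hx) x.2) (Fin.cast (congrArg d hy) y.2)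
      else 0
    else 0

/-- Extract the (i,j) block of a `BIx`-indexed matrix. -/
def blk {A : Type*} (i j : Fin Np) (P : Matrix (BIx d) (BIx d) A) :
    Matrix (Fin (d i)) (Fin (d j)) A :=
  Matrix.of fun a b => P ⟨i, a⟩ ⟨j, b⟩

lemma blk_emb {A : Type*} [Zero A] (i j : Fin Np) (P : Matrix (Fin (d i)) (Fin (d j)) A) :
    blk i j (emb i j P) = P := by
  ext a b; simp [blk, emb]

lemma sum_bix {M : Type*} [AddCommMonoid M] (i : Fin Np) (F : BIx d → M)
    (hF : ∀ x : BIx d, x.1 ≠ i → F x = 0) :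
    ∑ x : BIx d, F x = ∑ a : Fin (d i), F ⟨i, a⟩ := by
  rw [← Finset.univ_sigma_univ, Finset.sum_sigma]
  refine Finset.sum_eq_single i (fun k _ hk => ?_) (by simp)
  exact Finset.sum_eq_zero fun a _ => hF ⟨k, a⟩ hk

lemma sum_bix_dite {M : Type*} [AddCommMonoid M] (i : Fin Np) (F : Fin (d i) → M) :
    (∑ x : BIx d, if h : x.1 = i then F (Fin.cast (congrArg d h) x.2) else 0)
      = ∑ a : Fin (d i), F a := by
  rw [sum_bix i _ (fun x hx => dif_neg hx)]
  simp

end Helpers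
section Helpers2

variable {Np : ℕ} {d : Fin Np → ℕ}

lemma cMul_one {p r : Type*} [Fintype p] [DecidableEq p] {M : Type*} [AddCommMonoid M]
    [Module ℂ M] (Z : Matrix p r M) : cMul (1 : Matrix p p ℂ) Z = Z := by
  ext i k
  simp [cMul, Matrix.one_apply, ite_smul]

lemma mulC_one {p r : Type*} [Fintype r] [DecidableEq r] {M : Type*} [AddCommMonoid M]
    [Module ℂ M] (Z : Matrix p r M) : mulC Z (1 : Matrix r r ℂ) = Z := by
  ext i k
  simp [mulC, Matrix.one_apply, ite_smul]

lemma sandwich_one {p q : Type*} [Fintype p] [Fintype q] [DecidableEq p] [DecidableEq q]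
    {M : Type*} [AddCommMonoid M] [Module ℂ M] (P : Matrix p q M) :
    sandwich (1 : Matrix p p ℂ) P (1 : Matrix q q ℂ) = P := by
  rw [sandwich, cMul_one, Matrix.conjTranspose_one, mulC_one]

lemma sandwich_apply {p q p' q' : Type*} [Fintype p] [Fintype q] {M : Type*}
    [AddCommMonoid M] [Module ℂ M] (α : Matrix p' p ℂ) (P : Matrix p q M)
    (β : Matrix q' q ℂ) (x : p') (y : q') :
    sandwich α P β x y = ∑ w, star (β y w) • ∑ v, α x v • P v w := by
  simp [sandwich, mulC, cMul, Matrix.conjTranspose_apply]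

lemma sandwich_emb {A : Type*} [AddCommMonoid A] [Module ℂ A] (i' i j' j : Fin Np)
    (α : Matrix (Fin (d i')) (Fin (d i)) ℂ) (β : Matrix (Fin (d j')) (Fin (d j)) ℂ)
    (P : Matrix (BIx d) (BIx d) A) :
    sandwich (emb i' i α) P (emb j' j β) = emb i' j' (sandwich α (blk i j P) β) := by
  ext x y
  obtain ⟨xi, xa⟩ := x; obtain ⟨yi, yb⟩ := y
  rw [sandwich_apply]
  by_cases hx : xi = i'
  · subst hx
    by_cases hy : yi = j'
    · subst hy
      have hin : ∀ b : Fin (d j),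
          (∑ v : BIx d, emb xi i α ⟨xi, xa⟩ v • P v ⟨j, b⟩)
            = ∑ a : Fin (d i), α xa a • P ⟨i, a⟩ ⟨j, b⟩ := by
        intro b
        refine (sum_bix i _ fun v hv => ?_).trans ?_
        · simp [emb, dif_neg hv]
        · simp [emb]
      refine (sum_bix j _ fun w hw => ?_).trans ?_
      · simp [emb, dif_neg hw]
      · simp only [hin]
        simp [emb, blk, sandwich_apply]
    · refine Eq.trans (Finset.sum_eq_zero fun w _ => ?_) (by simp [emb, dif_neg hy])
      simp [emb, dif_neg hy]
  · refine Eq.trans (Finset.sum_eq_zero fun w _ => ?_) (by simp [emb, dif_neg hx])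
    have hz : ∀ v : BIx d, emb i' i α ⟨xi, xa⟩ v • P v w = 0 := fun v => by
      simp [emb, dif_neg hx]
    simp [hz]

end Helpers2
section Helpers3

variable {V : Type*} [AddCommGroup V] [Module ℂ V]
variable {Np : ℕ} {d : Fin Np → ℕ} {Z : ∀ i : Fin Np, Matrix (Fin (d i)) (Fin (d i)) V}

/-- An intertwiner between two of the points gives an element of the intertwining algebra
of the direct sum, supported in a single block. -/
lemma emb_mem_interAlg {i' i : Fin Np} (α : Matrix (Fin (d i')) (Fin (d i)) ℂ)
    (hα : cMul α (Z i) = mulC (Z i') α) : emb i' i α ∈ interAlg Z := by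
  show cMul (emb i' i α) (dirSum Z) = mulC (dirSum Z) (emb i' i α)
  ext x y
  obtain ⟨xi, xa⟩ := x; obtain ⟨yi, yb⟩ := y
  simp only [cMul, mulC, Matrix.of_apply]
  by_cases hx : xi = i'
  · subst hx
    by_cases hy : yi = i
    · subst hy
      rw [sum_bix yi (fun w => emb xi yi α ⟨xi, xa⟩ w • dirSum Z w ⟨yi, yb⟩)
          (fun w hw => by simp [dirSum, dif_neg hw]),
        sum_bix xi (fun w => emb xi yi α w ⟨yi, yb⟩ • dirSum Z ⟨xi, xa⟩ w)
          (fun w hw => by simp [emb, dif_neg hw])]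
      have h1 := congrFun (congrFun hα xa) yb
      simp only [cMul, mulC, Matrix.of_apply] at h1
      simpa [emb, dirSum] using h1
    · refine Eq.trans (Finset.sum_eq_zero fun w _ => ?_)
        (Eq.symm (Finset.sum_eq_zero fun w _ => ?_))
      · by_cases hw : w.1 = i
        · simp [dirSum, show w.1 ≠ yi from hw ▸ fun h => hy h.symm]
        · simp [emb, dif_neg hw]
      · simp [emb, dif_neg hy]
  · refine Eq.trans (Finset.sum_eq_zero fun w _ => ?_)
      (Eq.symm (Finset.sum_eq_zero fun w _ => ?_))
    · simp [emb, dif_neg hx]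
    · by_cases hw : w.1 = i'
      · simp [dirSum, show xi ≠ w.1 from hw ▸ hx]
      · simp [emb, dif_neg hw]

/-- The diagonal block projection lies in the intertwining algebra. -/
lemma eproj_mem_interAlg (i : Fin Np) :
    emb i i (1 : Matrix (Fin (d i)) (Fin (d i)) ℂ) ∈ interAlg Z :=
  emb_mem_interAlg 1 (by rw [cMul_one, mulC_one])

lemma sandwich_eproj {A : Type*} [AddCommMonoid A] [Module ℂ A] (i j : Fin Np)
    (P : Matrix (BIx d) (BIx d) A) :
    sandwich (emb i i (1 : Matrix (Fin (d i)) (Fin (d i)) ℂ)) P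
      (emb j j (1 : Matrix (Fin (d j)) (Fin (d j)) ℂ)) = emb i j (blk i j P) := by
  rw [sandwich_emb, sandwich_one]

end Helpers3
section Helpers4

variable {Np : ℕ} {d : Fin Np → ℕ}

lemma blk_phiK {A B : Type*} (K : KernelIx d A B) (i j : Fin Np)
    (P : Matrix (BIx d) (BIx d) A) :
    blk i j (phiK K P) = K i j (blk i j P) := rfl

lemma phiK_apply {A B : Type*} (K : KernelIx d A B) (P : Matrix (BIx d) (BIx d) A)
    (x y : BIx d) : phiK K P x y = K x.1 y.1 (blk x.1 y.1 P) x.2 y.2 := rfl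

lemma phiK_emb {A B : Type*} [AddCommMonoid A] [Module ℂ A] [AddCommMonoid B] [Module ℂ B]
    {K : KernelIx d A B} (hl : GradedLinearIx K) (i j : Fin Np)
    (Q : Matrix (Fin (d i)) (Fin (d j)) A) :
    phiK K (emb i j Q) = emb i j (K i j Q) := by
  ext x y
  obtain ⟨xi, xa⟩ := x; obtain ⟨yi, yb⟩ := y
  rw [phiK_apply]
  by_cases hx : xi = i
  · subst hx
    by_cases hy : yi = j
    · subst hy
      rw [blk_emb]
      simp [emb]
    · have hb : blk xi yi (emb xi j Q) = 0 := by
        ext a b; simp [blk, emb, dif_neg hy]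
      rw [hb, (hl xi yi).map_zero]
      simp [emb, dif_neg hy]
  · have hb : blk xi yi (emb i j Q) = 0 := by
      ext a b; simp [blk, emb, dif_neg hx]
    rw [hb, (hl xi yi).map_zero]
    simp [emb, dif_neg hx]

lemma sum_emb_blk {A : Type*} [AddCommMonoid A] (M : Matrix (BIx d) (BIx d) A) :
    (∑ i : Fin Np, ∑ j : Fin Np, emb i j (blk i j M)) = M := by
  ext x y
  obtain ⟨xi, xa⟩ := x; obtain ⟨yi, yb⟩ := y
  simp only [Matrix.sum_apply]
  rw [Finset.sum_eq_single xi (fun k _ hk => Finset.sum_eq_zero fun j _ => by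
      simp [emb, dif_neg (Ne.symm hk)]) (by simp)]
  rw [Finset.sum_eq_single yi (fun k _ hk => by simp [emb, dif_neg (Ne.symm hk)]) (by simp)]
  simp [emb, blk]

lemma sandwich_add_left {p q p' q' : Type*} [Fintype p] [Fintype q] {M : Type*}
    [AddCommMonoid M] [Module ℂ M] (α α' : Matrix p' p ℂ) (P : Matrix p q M)
    (β : Matrix q' q ℂ) :
    sandwich (α + α') P β = sandwich α P β + sandwich α' P β := by
  ext x y
  simp [sandwich_apply, add_smul, Finset.sum_add_distrib, smul_add, Matrix.add_apply]

lemma sandwich_add_right {p q p' q' : Type*} [Fintype p] [Fintype q] {M : Type*}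
    [AddCommMonoid M] [Module ℂ M] (α : Matrix p' p ℂ) (P : Matrix p q M)
    (β β' : Matrix q' q ℂ) :
    sandwich α P (β + β') = sandwich α P β + sandwich α P β' := by
  ext x y
  simp [sandwich_apply, add_smul, Finset.sum_add_distrib, Matrix.add_apply]

lemma sandwich_sum_left {ι : Type*} (s : Finset ι) {p q p' q' : Type*} [Fintype p]
    [Fintype q] {M : Type*} [AddCommMonoid M] [Module ℂ M] (α : ι → Matrix p' p ℂ)
    (P : Matrix p q M) (β : Matrix q' q ℂ) :
    sandwich (∑ t ∈ s, α t) P β = ∑ t ∈ s, sandwich (α t) P β := by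
  classical
  induction s using Finset.cons_induction with
  | empty => ext x y; simp [sandwich_apply]
  | cons a s ha ih => rw [Finset.sum_cons, Finset.sum_cons, sandwich_add_left, ih]

lemma sandwich_sum_right {ι : Type*} (s : Finset ι) {p q p' q' : Type*} [Fintype p]
    [Fintype q] {M : Type*} [AddCommMonoid M] [Module ℂ M] (α : Matrix p' p ℂ)
    (P : Matrix p q M) (β : ι → Matrix q' q ℂ) :
    sandwich α P (∑ t ∈ s, β t) = ∑ t ∈ s, sandwich α P (β t) := by
  classical
  induction s using Finset.cons_induction with
  | empty => ext x y; simp [sandwich_apply]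
  | cons a s ha ih => rw [Finset.sum_cons, Finset.sum_cons, sandwich_add_right, ih]

lemma blk_add {A : Type*} [AddCommMonoid A] (i j : Fin Np)
    (P Q : Matrix (BIx d) (BIx d) A) : blk i j (P + Q) = blk i j P + blk i j Q := rfl

lemma phiK_add {A B : Type*} [AddCommMonoid A] [Module ℂ A] [AddCommMonoid B] [Module ℂ B]
    {K : KernelIx d A B} (hl : GradedLinearIx K) (P Q : Matrix (BIx d) (BIx d) A) :
    phiK K (P + Q) = phiK K P + phiK K Q := by
  ext x y
  rw [Matrix.add_apply, phiK_apply, phiK_apply, phiK_apply, blk_add,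
    (hl x.1 y.1).map_add, Matrix.add_apply]

lemma phiK_sum {ι : Type*} (s : Finset ι) {A B : Type*} [AddCommMonoid A] [Module ℂ A]
    [AddCommMonoid B] [Module ℂ B] {K : KernelIx d A B} (hl : GradedLinearIx K)
    (P : ι → Matrix (BIx d) (BIx d) A) :
    phiK K (∑ t ∈ s, P t) = ∑ t ∈ s, phiK K (P t) := by
  classical
  induction s using Finset.cons_induction with
  | empty =>
    ext x y
    rw [Finset.sum_empty, Finset.sum_empty, phiK_apply]
    have : blk x.1 y.1 (0 : Matrix (BIx d) (BIx d) A) = 0 := rfl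
    rw [this, (hl x.1 y.1).map_zero]
    rfl
  | cons a s ha ih => rw [Finset.sum_cons, Finset.sum_cons, phiK_add hl, ih]

end Helpers4
section Helpers5

variable {V : Type*} [AddCommGroup V] [Module ℂ V]
variable {Np : ℕ} {d : Fin Np → ℕ} {Z : ∀ i : Fin Np, Matrix (Fin (d i)) (Fin (d i)) V}

lemma blk_intertwines {α : Matrix (BIx d) (BIx d) ℂ} (hα : α ∈ interAlg Z)
    (i' i : Fin Np) : cMul (blk i' i α) (Z i) = mulC (Z i') (blk i' i α) := by
  have hα' : cMul α (dirSum Z) = mulC (dirSum Z) α := hα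
  ext a b
  have h1 : cMul α (dirSum Z) ⟨i', a⟩ ⟨i, b⟩ = mulC (dirSum Z) α ⟨i', a⟩ ⟨i, b⟩ := by
    rw [hα']
  simp only [cMul, mulC, Matrix.of_apply] at h1 ⊢
  rw [sum_bix i (fun w => α ⟨i', a⟩ w • dirSum Z w ⟨i, b⟩)
      (fun w hw => by simp [dirSum, dif_neg hw]),
    sum_bix i' (fun w => α w ⟨i, b⟩ • dirSum Z ⟨i', a⟩ w)
      (fun w hw => by
        simp only [dirSum, Matrix.of_apply]
        rw [dif_neg fun h => hw h.symm, smul_zero])] at h1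
  simpa [blk, dirSum] using h1

variable {A B : Type*} [AddCommMonoid A] [Module ℂ A] [AddCommMonoid B] [Module ℂ B]

lemma isBimod_phiK {K : KernelIx d A B} (hl : GradedLinearIx K) (hnc : IsNCKernelIx Z K) :
    IsBimod (interAlg Z) (phiK K) := by
  intro α hα β hβ P
  rw [show α = ∑ i', ∑ i, emb i' i (blk i' i α) from (sum_emb_blk α).symm,
    show β = ∑ j', ∑ j, emb j' j (blk j' j β) from (sum_emb_blk β).symm]
  simp only [sandwich_sum_left, sandwich_sum_right, phiK_sum _ hl]
  refine Finset.sum_congr rfl fun j' _ => Finset.sum_congr rfl fun j _ =>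
    Finset.sum_congr rfl fun i' _ => Finset.sum_congr rfl fun i _ => ?_
  rw [sandwich_emb, phiK_emb hl,
    ← hnc i i' j j' (blk i' i α) (blk j' j β) (blk_intertwines hα i' i)
      (blk_intertwines hβ j' j) (blk i j P),
    sandwich_emb, blk_phiK]

lemma nc_of_bimod {K : KernelIx d A B} (hl : GradedLinearIx K)
    (hb : IsBimod (interAlg Z) (phiK K)) : IsNCKernelIx Z K := by
  intro i i' j j' α β hα hβ P
  have h := hb (emb i' i α) (emb_mem_interAlg α hα) (emb j' j β) (emb_mem_interAlg β hβ)
    (emb i j P)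
  rw [sandwich_emb, blk_emb, phiK_emb hl, phiK_emb hl, sandwich_emb, blk_emb] at h
  have h2 := congrArg (blk i' j') h
  rw [blk_emb, blk_emb] at h2
  exact h2.symm

end Helpers5
section Helpers6

variable {Np : ℕ} {d : Fin Np → ℕ}

lemma sum_bix_expand {M : Type*} [AddCommMonoid M] (F : BIx d → M) :
    ∑ x : BIx d, F x = ∑ i : Fin Np, ∑ a : Fin (d i), F ⟨i, a⟩ := by
  rw [← Finset.univ_sigma_univ, Finset.sum_sigma]

variable {Y : Type*} [NormedAddCommGroup Y] [InnerProductSpace ℂ Y]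
variable {A : Type*} [NonUnitalSemiring A] [StarRing A]

lemma cpix_general {K : KernelIx d A (Y →L[ℂ] Y)} (hK : IsCPIxH K) {ι : Type*} [Fintype ι]
    (f : ι → Fin Np) (P : ∀ l : ι, Matrix (Fin (d (f l))) (Fin 1) A)
    (y : ∀ l : ι, Fin (d (f l)) → Y) :
    0 ≤ ∑ l, ∑ l', ∑ a, ∑ b,
      (inner ℂ (y l a) (K (f l) (f l') (P l * (P l')ᴴ) a b (y l' b)) : ℂ) := by
  classical
  let e := Fintype.equivFin ι
  have h := hK (Fintype.card ι) (f ∘ e.symm) (fun l => P (e.symm l)) (fun l => y (e.symm l))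
  set T : ι → ι → ℂ := fun l l' => ∑ a, ∑ b,
    (inner ℂ (y l a) (K (f l) (f l') (P l * (P l')ᴴ) a b (y l' b)) : ℂ) with hT
  have h2 : (∑ x, ∑ x', T (e.symm x) (e.symm x')) = ∑ l, ∑ l', T l l' := by
    calc (∑ x, ∑ x', T (e.symm x) (e.symm x'))
        = ∑ x, ∑ l', T (e.symm x) l' :=
          Finset.sum_congr rfl fun x _ => Equiv.sum_comp e.symm (T (e.symm x))
      _ = ∑ l, ∑ l', T l l' := Equiv.sum_comp e.symm (fun l => ∑ l', T l l')
  exact le_of_le_of_eq h h2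

lemma sum_perm6 {ι₁ ι₂ : Type*} [Fintype ι₁] [Fintype ι₂] {M : Type*} [AddCommMonoid M]
    (c : ι₁ → ι₁ → ι₂ → ι₂ → ι₁ → ι₂ → M) :
    (∑ p, ∑ q, ∑ x, ∑ y, ∑ r, ∑ w, c p q x y r w)
      = ∑ r, ∑ w, ∑ p, ∑ x, ∑ q, ∑ y, c p q x y r w := by
  calc (∑ p, ∑ q, ∑ x, ∑ y, ∑ r, ∑ w, c p q x y r w)
      = ∑ p, ∑ q, ∑ x, ∑ y, ∑ t : ι₁ × ι₂, c p q x y t.1 t.2 :=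
        Finset.sum_congr rfl fun p _ => Finset.sum_congr rfl fun q _ =>
          Finset.sum_congr rfl fun x _ => Finset.sum_congr rfl fun y _ =>
            (Fintype.sum_prod_type (f := fun t : ι₁ × ι₂ => c p q x y t.1 t.2)).symm
    _ = ∑ p, ∑ q, ∑ x, ∑ t : ι₁ × ι₂, ∑ y, c p q x y t.1 t.2 :=
        Finset.sum_congr rfl fun p _ => Finset.sum_congr rfl fun q _ =>
          Finset.sum_congr rfl fun x _ => Finset.sum_comm
    _ = ∑ p, ∑ q, ∑ t : ι₁ × ι₂, ∑ x, ∑ y, c p q x y t.1 t.2 :=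
        Finset.sum_congr rfl fun p _ => Finset.sum_congr rfl fun q _ => Finset.sum_comm
    _ = ∑ p, ∑ t : ι₁ × ι₂, ∑ q, ∑ x, ∑ y, c p q x y t.1 t.2 :=
        Finset.sum_congr rfl fun p _ => Finset.sum_comm
    _ = ∑ t : ι₁ × ι₂, ∑ p, ∑ q, ∑ x, ∑ y, c p q x y t.1 t.2 := Finset.sum_comm
    _ = ∑ r, ∑ w, ∑ p, ∑ q, ∑ x, ∑ y, c p q x y r w :=
        Fintype.sum_prod_type (f := fun t : ι₁ × ι₂ => ∑ p, ∑ q, ∑ x, ∑ y, c p q x y t.1 t.2)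
    _ = ∑ r, ∑ w, ∑ p, ∑ x, ∑ q, ∑ y, c p q x y r w :=
        Finset.sum_congr rfl fun r _ => Finset.sum_congr rfl fun w _ =>
          Finset.sum_congr rfl fun p _ => Finset.sum_comm

end Helpers6
section Helpers7

variable {Np : ℕ} {d : Fin Np → ℕ}
variable {Y : Type*} [NormedAddCommGroup Y] [InnerProductSpace ℂ Y]
variable {A : Type*} [NonUnitalSemiring A] [StarRing A] [Module ℂ A]

lemma cpmap_phiK {K : KernelIx d A (Y →L[ℂ] Y)} (hl : GradedLinearIx K)
    (hcp : IsCPIxH K) : IsCPMap (phiK K) := by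
  intro k Q hQ yv
  obtain ⟨C, hC⟩ := hQ
  set Pc : Fin k → BIx d → Fin k → (i : Fin Np) → Matrix (Fin (d i)) (Fin 1) A :=
    fun r w p i => Matrix.of fun a _ => star (C r p w ⟨i, a⟩) with hPc
  have hblk : ∀ (p q : Fin k) (i j : Fin Np),
      blk i j (Q p q) = ∑ r, ∑ w, Pc r w p i * (Pc r w q j)ᴴ := by
    intro p q i j
    ext a b
    rw [hC]
    simp [blk, hPc, Matrix.mul_apply, Matrix.sum_apply, Matrix.conjTranspose_apply,
      Matrix.star_apply, star_star, Fin.sum_univ_one]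
  have hterm : ∀ (p q : Fin k) (x y : BIx d),
      (inner ℂ (yv p x) ((Matrix.of fun p' q' => phiK K (Q p' q')) p q x y (yv q y)) : ℂ)
        = ∑ r, ∑ w, (inner ℂ (yv p x)
            (K x.1 y.1 (Pc r w p x.1 * (Pc r w q y.1)ᴴ) x.2 y.2 (yv q y)) : ℂ) := by
    intro p q x y
    have hKsum : K x.1 y.1 (∑ r, ∑ w, Pc r w p x.1 * (Pc r w q y.1)ᴴ)
        = ∑ r, ∑ w, K x.1 y.1 (Pc r w p x.1 * (Pc r w q y.1)ᴴ) := by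
      rw [show K x.1 y.1 = ⇑(IsLinearMap.mk' _ (hl x.1 y.1)) from rfl, map_sum]
      exact Finset.sum_congr rfl fun r _ => map_sum _ _ _
    rw [Matrix.of_apply, phiK_apply, hblk, hKsum]
    simp only [Matrix.sum_apply, ContinuousLinearMap.sum_apply, inner_sum]
  have hmain : (0 : ℂ) ≤ ∑ r, ∑ w, ∑ p, ∑ x, ∑ q, ∑ y, (inner ℂ (yv p x)
      (K x.1 y.1 (Pc r w p x.1 * (Pc r w q y.1)ᴴ) x.2 y.2 (yv q y)) : ℂ) := by
    refine Finset.sum_nonneg fun r _ => Finset.sum_nonneg fun w _ => ?_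
    have h0 := cpix_general hcp (ι := Fin k × Fin Np) Prod.snd
      (fun l => Pc r w l.1 l.2) (fun l a => yv l.1 ⟨l.2, a⟩)
    refine le_of_le_of_eq h0 ?_
    calc (∑ l : Fin k × Fin Np, ∑ l' : Fin k × Fin Np, ∑ a, ∑ b, (inner ℂ (yv l.1 ⟨l.2, a⟩)
          (K l.2 l'.2 (Pc r w l.1 l.2 * (Pc r w l'.1 l'.2)ᴴ) a b (yv l'.1 ⟨l'.2, b⟩)) : ℂ))
        = ∑ l : Fin k × Fin Np, ∑ q, ∑ j, ∑ a, ∑ b, (inner ℂ (yv l.1 ⟨l.2, a⟩)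
            (K l.2 j (Pc r w l.1 l.2 * (Pc r w q j)ᴴ) a b (yv q ⟨j, b⟩)) : ℂ) :=
          Finset.sum_congr rfl fun l _ =>
            Fintype.sum_prod_type (f := fun l' : Fin k × Fin Np => ∑ a, ∑ b,
              (inner ℂ (yv l.1 ⟨l.2, a⟩) (K l.2 l'.2 (Pc r w l.1 l.2 * (Pc r w l'.1 l'.2)ᴴ)
                a b (yv l'.1 ⟨l'.2, b⟩)) : ℂ))
      _ = ∑ p, ∑ i, ∑ q, ∑ j, ∑ a, ∑ b, (inner ℂ (yv p ⟨i, a⟩)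
            (K i j (Pc r w p i * (Pc r w q j)ᴴ) a b (yv q ⟨j, b⟩)) : ℂ) :=
          Fintype.sum_prod_type (f := fun l : Fin k × Fin Np => ∑ q, ∑ j, ∑ a, ∑ b,
            (inner ℂ (yv l.1 ⟨l.2, a⟩) (K l.2 j (Pc r w l.1 l.2 * (Pc r w q j)ᴴ)
              a b (yv q ⟨j, b⟩)) : ℂ))
      _ = ∑ p, ∑ i, ∑ q, ∑ a, ∑ j, ∑ b, (inner ℂ (yv p ⟨i, a⟩)
            (K i j (Pc r w p i * (Pc r w q j)ᴴ) a b (yv q ⟨j, b⟩)) : ℂ) :=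
          Finset.sum_congr rfl fun p _ => Finset.sum_congr rfl fun i _ =>
            Finset.sum_congr rfl fun q _ => Finset.sum_comm
      _ = ∑ p, ∑ i, ∑ a, ∑ q, ∑ j, ∑ b, (inner ℂ (yv p ⟨i, a⟩)
            (K i j (Pc r w p i * (Pc r w q j)ᴴ) a b (yv q ⟨j, b⟩)) : ℂ) :=
          Finset.sum_congr rfl fun p _ => Finset.sum_congr rfl fun i _ =>
            Finset.sum_comm
      _ = ∑ p, ∑ x : BIx d, ∑ q, ∑ y : BIx d, (inner ℂ (yv p x)
            (K x.1 y.1 (Pc r w p x.1 * (Pc r w q y.1)ᴴ) x.2 y.2 (yv q y)) : ℂ) := by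
          refine Finset.sum_congr rfl fun p _ => ?_
          rw [sum_bix_expand (F := fun x : BIx d => ∑ q, ∑ y : BIx d, (inner ℂ (yv p x)
            (K x.1 y.1 (Pc r w p x.1 * (Pc r w q y.1)ᴴ) x.2 y.2 (yv q y)) : ℂ))]
          refine Finset.sum_congr rfl fun i _ => Finset.sum_congr rfl fun a _ =>
            Finset.sum_congr rfl fun q _ => ?_
          rw [sum_bix_expand (F := fun y : BIx d => (inner ℂ (yv p ⟨i, a⟩)
            (K i y.1 (Pc r w p i * (Pc r w q y.1)ᴴ) a y.2 (yv q y)) : ℂ))]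
  calc (0 : ℂ)
      ≤ ∑ r, ∑ w, ∑ p, ∑ x, ∑ q, ∑ y, (inner ℂ (yv p x)
          (K x.1 y.1 (Pc r w p x.1 * (Pc r w q y.1)ᴴ) x.2 y.2 (yv q y)) : ℂ) := hmain
    _ = ∑ p, ∑ q, ∑ x, ∑ y, ∑ r, ∑ w, (inner ℂ (yv p x)
          (K x.1 y.1 (Pc r w p x.1 * (Pc r w q y.1)ᴴ) x.2 y.2 (yv q y)) : ℂ) :=
        (sum_perm6 _).symm
    _ = ∑ p, ∑ q, ∑ x, ∑ y, (inner ℂ (yv p x)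
          ((Matrix.of fun p' q' => phiK K (Q p' q')) p q x y (yv q y)) : ℂ) := by
        simp only [hterm]

end Helpers7
section Helpers8

variable {Np : ℕ} {d : Fin Np → ℕ}
variable {Y : Type*} [NormedAddCommGroup Y] [InnerProductSpace ℂ Y]
variable {A : Type*} [NonUnitalSemiring A] [StarRing A] [Module ℂ A]

lemma cpix_of_cpmap {K : KernelIx d A (Y →L[ℂ] Y)} (hcp : IsCPMap (phiK K)) :
    IsCPIxH K := by
  intro L f P y
  by_cases hL : L = 0
  · subst hL; simp
  by_cases hB : Nonempty (BIx d)
  · obtain ⟨x₀⟩ := hB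
    have r₀ : Fin L := ⟨0, Nat.pos_of_ne_zero hL⟩
    set M : Fin L → Matrix (BIx d) (BIx d) A := fun l => Matrix.of fun x u =>
      if x = x₀ then
        (if h : u.1 = f l then star (P l (Fin.cast (congrArg d h) u.2) 0) else 0)
      else 0 with hM
    set C : Matrix (Fin L) (Fin L) (Matrix (BIx d) (BIx d) A) :=
      Matrix.of fun r l => if r = r₀ then M l else 0 with hCdef
    set Q : Matrix (Fin L) (Fin L) (Matrix (BIx d) (BIx d) A) := Cᴴ * C with hQdef
    have hQ : ∀ l l', Q l l' = (M l)ᴴ * M l' := by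
      intro l l'
      rw [hQdef, Matrix.mul_apply]
      refine (Finset.sum_eq_single r₀ (fun r _ hr => ?_) (by simp)).trans ?_
      · simp [hCdef, Matrix.conjTranspose_apply, if_neg hr]
      · simp [hCdef, Matrix.conjTranspose_apply, Matrix.star_eq_conjTranspose]
    have hblkQ : ∀ l l', blk (f l) (f l') (Q l l') = P l * (P l')ᴴ := by
      intro l l'
      ext a b
      rw [blk, Matrix.of_apply, hQ l l']
      simp only [Matrix.mul_apply, Matrix.conjTranspose_apply]
      rw [Finset.sum_eq_single x₀ (fun x _ hx => by simp [hM, if_neg hx]) (by simp)]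
      simp [hM, Fin.sum_univ_one]
    set yt : ∀ l : Fin L, BIx d → Y := fun l x =>
      if h : x.1 = f l then y l (Fin.cast (congrArg d h) x.2) else 0 with hyt
    have h := hcp L Q ⟨C, rfl⟩ yt
    refine le_of_le_of_eq h (Finset.sum_congr rfl fun l _ =>
      Finset.sum_congr rfl fun l' _ => ?_)
    calc (∑ x : BIx d, ∑ v : BIx d,
          (inner ℂ (yt l x) ((Matrix.of fun i j => phiK K (Q i j)) l l' x v (yt l' v)) : ℂ))
        = ∑ a : Fin (d (f l)), ∑ v : BIx d,
            (inner ℂ (yt l ⟨f l, a⟩)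
              ((Matrix.of fun i j => phiK K (Q i j)) l l' ⟨f l, a⟩ v (yt l' v)) : ℂ) := by
          refine sum_bix (f l) _ fun x hx => Finset.sum_eq_zero fun v _ => ?_
          rw [show yt l x = 0 from dif_neg hx, inner_zero_left]
      _ = ∑ a : Fin (d (f l)), ∑ b : Fin (d (f l')),
            (inner ℂ (yt l ⟨f l, a⟩) ((Matrix.of fun i j => phiK K (Q i j)) l l'
              ⟨f l, a⟩ ⟨f l', b⟩ (yt l' ⟨f l', b⟩)) : ℂ) := by
          refine Finset.sum_congr rfl fun a _ => sum_bix (f l') _ fun v hv => ?_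
          rw [show yt l' v = 0 from dif_neg hv, map_zero, inner_zero_right]
      _ = ∑ a, ∑ b,
            (inner ℂ (y l a) (K (f l) (f l') (P l * (P l')ᴴ) a b (y l' b)) : ℂ) := by
          refine Finset.sum_congr rfl fun a _ => Finset.sum_congr rfl fun b _ => ?_
          rw [Matrix.of_apply, phiK_apply]
          have hb : blk (f l) (f l') (Q l l') = P l * (P l')ᴴ := hblkQ l l'
          simp [hyt, hb]
  · have hIE : ∀ l : Fin L, IsEmpty (Fin (d (f l))) :=
      fun l => ⟨fun a => (not_nonempty_iff.mp hB).false ⟨f l, a⟩⟩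
    refine le_of_eq (Eq.symm ?_)
    refine Finset.sum_eq_zero fun l _ => Finset.sum_eq_zero fun l' _ => ?_
    haveI := hIE l
    rw [Finset.univ_eq_empty, Finset.sum_empty]

end Helpers8
section Helpers9

variable {Np : ℕ} {d : Fin Np → ℕ}

/-- The kernel associated with a block map `φ`. -/
def Kof {A B : Type*} [Zero A]
    (φ : Matrix (BIx d) (BIx d) A → Matrix (BIx d) (BIx d) B) : KernelIx d A B :=
  fun i j P => blk i j (φ (emb i j P))

variable {V : Type*} [AddCommGroup V] [Module ℂ V]
variable {Z : ∀ i : Fin Np, Matrix (Fin (d i)) (Fin (d i)) V}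
variable {A B : Type*} [AddCommMonoid A] [Module ℂ A] [AddCommMonoid B] [Module ℂ B]

lemma phiK_Kof {φ : Matrix (BIx d) (BIx d) A → Matrix (BIx d) (BIx d) B}
    (hb : IsBimod (interAlg Z) φ) : phiK (Kof φ) = φ := by
  funext P
  ext x y
  obtain ⟨xi, xa⟩ := x; obtain ⟨yi, yb⟩ := y
  rw [phiK_apply]
  show blk xi yi (φ (emb xi yi (blk xi yi P))) xa yb = φ P ⟨xi, xa⟩ ⟨yi, yb⟩
  rw [← sandwich_eproj, hb _ (eproj_mem_interAlg (Z := Z) xi) _ (eproj_mem_interAlg yi),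
    sandwich_eproj, blk_emb]
  rfl

lemma gradedLinear_Kof {φ : Matrix (BIx d) (BIx d) A →ₗ[ℂ] Matrix (BIx d) (BIx d) B} :
    GradedLinearIx (Kof ⇑φ) := by
  intro i j
  constructor
  · intro P Q
    have he : emb i j (P + Q) = emb i j P + emb i j Q := by
      ext x y
      by_cases hx : x.1 = i <;> by_cases hy : y.1 = j <;>
        simp [emb, hx, hy, Matrix.add_apply]
    show blk i j (φ (emb i j (P + Q))) = _
    rw [he, map_add]
    rfl
  · intro c P
    have he : emb i j (c • P) = c • emb i j P := by
      ext x y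
      by_cases hx : x.1 = i <;> by_cases hy : y.1 = j <;>
        simp [emb, hx, hy, Matrix.smul_apply]
    show blk i j (φ (emb i j (c • P))) = _
    rw [he, map_smul]
    rfl

end Helpers9
/-- Proposition 2.3(2): for a finite set of nc points `Ω` with
intertwining algebra `S = interAlg Z`, a graded (linear) kernel `K` on `Ω` is a completely
positive noncommutative kernel iff the associated block map `φ_K` is a completely positive
`(S,S^*)`-bimodule map; conversely every completely positive `(S,S^*)`-bimodule map `φ`
equals `φ_K` for a uniquely determined completely positive nc kernel `K` on `Ω`. -/
theorem statement2 {V : Type*} [AddCommGroup V] [Module ℂ V]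
    {A : Type*} [CStarAlgebra A]
    {Y : Type*} [NormedAddCommGroup Y] [InnerProductSpace ℂ Y] [CompleteSpace Y]
    {Np : ℕ} (d : Fin Np → ℕ) (Z : ∀ i : Fin Np, Matrix (Fin (d i)) (Fin (d i)) V) :
    (∀ K : KernelIx d A (Y →L[ℂ] Y), GradedLinearIx K →
        ((IsNCKernelIx Z K ∧ IsCPIxH K) ↔
          (IsBimod (interAlg Z) (phiK K) ∧ IsCPMap (phiK K)))) ∧
    (∀ φ : Matrix (BIx d) (BIx d) A →ₗ[ℂ] Matrix (BIx d) (BIx d) (Y →L[ℂ] Y),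
        IsBimod (interAlg Z) ⇑φ → IsCPMap ⇑φ →
        ∃! K : KernelIx d A (Y →L[ℂ] Y),
          (GradedLinearIx K ∧ IsNCKernelIx Z K ∧ IsCPIxH K) ∧ phiK K = ⇑φ) := by
  constructor
  · intro K hl
    constructor
    · rintro ⟨hnc, hcp⟩
      exact ⟨isBimod_phiK hl hnc, cpmap_phiK hl hcp⟩
    · rintro ⟨hb, hcp⟩
      exact ⟨nc_of_bimod hl hb, cpix_of_cpmap hcp⟩
  · intro φ hb hcp
    have heq : phiK (Kof ⇑φ) = ⇑φ := phiK_Kof hb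
    have hgl : GradedLinearIx (Kof ⇑φ) := gradedLinear_Kof
    have hb' : IsBimod (interAlg Z) (phiK (Kof ⇑φ)) := by rw [heq]; exact hb
    have hcp' : IsCPMap (phiK (Kof ⇑φ)) := by rw [heq]; exact hcp
    refine ⟨Kof ⇑φ, ⟨⟨hgl, nc_of_bimod hgl hb', cpix_of_cpmap hcp'⟩, heq⟩, ?_⟩
    rintro K' ⟨-, hK'⟩
    funext i j P
    have h1 : phiK K' (emb i j P) = φ (emb i j P) := by rw [hK']
    have h2 := congrArg (blk i j) h1
    rw [blk_phiK, blk_emb] at h2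
    exact h2

end NCK

end
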